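/- Consider a scheduling game with rank-based utilities on m identical machines with n unit jobs, where n = ℓ·m + c with 0 ≤ c < m. Let s be a profile that is stable against cost-reducing deviations and balanced, i.e., exactly c machines have load ℓ+1 and the remaining m−c machines have load ℓ. Let P be the set of jobs with completion time ℓ+1, P₁ the set of jobs with completion time ℓ that are processed last on their machine, and P₂ the set of jobs with completion time ℓ that are not processed last on their machine. Then s is a pure Nash equilibrium if and only if: (1) for every j ∈ P assigned to machine M_i and every j' ∈ P with j' ≠ j, π_i(j) < π_i(j'); and (2) for every j ∈ P₁ assigned to machine M_i and every j' ∈ P₁ with j' ≠ j, π_i(j) < π_i(j'), and for every j ∈ P₂ assigned to machine M_i and every j' ∈ P₁, π_i(j) < π_i(j'). -/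
import Mathlib


open Finset
open scoped Classical
set_option linter.unusedSectionVars false
set_option linter.unusedVariables false
set_option maxHeartbeats 1000000

noncomputable section

variable {J M : Type*} [Fintype J]

/-- Completion time of job `j` in profile `s`: the total processing time of the jobs on
`j`'s machine that do not come after `j` in that machine's priority list, divided by the speed. -/
def Ctime (p : J → ℝ) (r : M → ℝ) (π : M → J → ℕ) (s : J → M) (j : J) : ℝ :=
  (∑ j' ∈ univ.filter (fun j' => s j' = s j ∧ π (s j) j' ≤ π (s j) j), p j') / r (s j)

/-- Rank of job `j` in profile `s`. -/
def rankOf (p : J → ℝ) (r : M → ℝ) (π : M → J → ℕ) (s : J → M) (j : J) : ℝ :=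
  ((univ.filter (fun j' => Ctime p r π s j' < Ctime p r π s j)).card : ℝ) +
    (((univ.filter (fun j' => Ctime p r π s j' = Ctime p r π s j)).card : ℝ) + 1) / 2

/-- The unilateral deviation of job `j` to machine `i` is beneficial. -/
def Beneficial (p : J → ℝ) (r : M → ℝ) (π : M → J → ℕ) (s : J → M) (j : J) (i : M) : Prop :=
  rankOf p r π (Function.update s j i) j < rankOf p r π s j ∨
    (rankOf p r π (Function.update s j i) j = rankOf p r π s j ∧
      Ctime p r π (Function.update s j i) j < Ctime p r π s j)

/-- Pure Nash equilibrium: no job has a beneficial deviation. -/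
def IsNE (p : J → ℝ) (r : M → ℝ) (π : M → J → ℕ) (s : J → M) : Prop :=
  ∀ j i, ¬ Beneficial p r π s j i

/-- `s` is stable against cost-reducing deviations. -/
def StableCost (p : J → ℝ) (r : M → ℝ) (π : M → J → ℕ) (s : J → M) : Prop :=
  ∀ j i, ¬ Ctime p r π (Function.update s j i) j < Ctime p r π s j

/-- Job `j` is assigned to machine `i` and is processed last on it. -/
def IsLastOn (π : M → J → ℕ) (s : J → M) (i : M) (j : J) : Prop :=
  s j = i ∧ ∀ j', j' ≠ j → s j' = i → π i j' < π i j

namespace Sched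

variable [Fintype M] (π : M → J → ℕ) (s : J → M)

def load (s : J → M) (i : M) : ℕ := (univ.filter (fun j => s j = i)).card

def pos (j : J) : ℕ :=
  (univ.filter (fun j' => s j' = s j ∧ π (s j) j' ≤ π (s j) j)).card

def below (b : M) (j : J) : ℕ :=
  (univ.filter (fun j' => s j' = b ∧ π b j' < π b j)).card

def cumul (x : ℕ) : ℕ := ∑ i, min x (load s i)

lemma Ctime_eq (j : J) :
    Ctime (fun _ => (1:ℝ)) (fun _ => (1:ℝ)) π s j = (pos π s j : ℝ) := by
  simp [Ctime, pos]

lemma one_le_pos (j : J) : 1 ≤ pos π s j := by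
  refine Finset.card_pos.mpr ⟨j, ?_⟩
  simp [pos]

lemma pos_le_load (j : J) : pos π s j ≤ load s (s j) := by
  apply Finset.card_le_card
  intro x hx
  simp only [mem_filter, mem_univ, true_and] at hx ⊢
  exact hx.1

lemma pos_lt_pos (hπ : ∀ i, Function.Injective (π i)) {j1 j2 : J} (h : s j1 = s j2)
    (hlt : π (s j1) j1 < π (s j1) j2) : pos π s j1 < pos π s j2 := by
  unfold pos
  rw [← h]
  apply Finset.card_lt_card
  rw [Finset.ssubset_iff_of_subset]
  · refine ⟨j2, ?_, ?_⟩
    · simp [h.symm]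
    · simp only [mem_filter, mem_univ, true_and, not_and, not_le]
      intro _; exact hlt
  · intro x hx
    simp only [mem_filter, mem_univ, true_and] at hx ⊢
    exact ⟨hx.1, le_trans hx.2 hlt.le⟩

lemma pos_inj (hπ : ∀ i, Function.Injective (π i)) {j1 j2 : J} (h : s j1 = s j2)
    (hp : pos π s j1 = pos π s j2) : j1 = j2 := by
  rcases lt_trichotomy (π (s j1) j1) (π (s j1) j2) with hl | he | hl
  · exact absurd hp (ne_of_lt (pos_lt_pos π s hπ h hl))
  · exact hπ _ he
  · have := pos_lt_pos π s hπ h.symm (by rwa [← h])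
    exact absurd hp.symm (ne_of_lt this)


lemma card_filter_pos_le (hπ : ∀ i, Function.Injective (π i)) (i : M) (t : ℕ) :
    (univ.filter (fun j => s j = i ∧ pos π s j ≤ t)).card = min t (load s i) := by
  classical
  set S : Finset J := univ.filter (fun j => s j = i) with hS
  have hmem : ∀ j, j ∈ S ↔ s j = i := by intro j; simp [hS]
  have hinj : Set.InjOn (pos π s) S := by
    intro j1 h1 j2 h2 hp
    exact pos_inj π s hπ (((hmem j1).mp h1).trans ((hmem j2).mp h2).symm) hp
  have himage : S.image (pos π s) = Icc 1 S.card := by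
    apply Finset.eq_of_subset_of_card_le
    · intro x hx
      simp only [mem_image] at hx
      obtain ⟨j, hj, rfl⟩ := hx
      rw [mem_Icc]
      refine ⟨one_le_pos π s j, ?_⟩
      calc pos π s j ≤ load s (s j) := pos_le_load π s j
        _ = S.card := by rw [(hmem j).mp hj]; rfl
    · rw [Finset.card_image_of_injOn hinj, Nat.card_Icc]
      omega
  have hkey : (univ.filter (fun j => s j = i ∧ pos π s j ≤ t)) =
      S.filter (fun j => pos π s j ≤ t) := by
    ext j; simp [hS, and_assoc]
  rw [hkey]
  have h2 : (S.filter (fun j => pos π s j ≤ t)).card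
      = ((S.filter (fun j => pos π s j ≤ t)).image (pos π s)).card := by
    rw [Finset.card_image_of_injOn (hinj.mono (by intro x hx; exact mem_of_mem_filter x hx))]
  rw [h2]
  have h3 : (S.filter (fun j => pos π s j ≤ t)).image (pos π s)
      = (S.image (pos π s)).filter (fun x => x ≤ t) := by
    rw [Finset.filter_image]
  rw [h3, himage]
  have h4 : (Icc 1 S.card).filter (fun x => x ≤ t) = Icc 1 (min t S.card) := by
    ext x; simp only [mem_filter, mem_Icc, le_min_iff]; omega
  rw [h4, Nat.card_Icc]
  have : load s i = S.card := rfl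
  omega

lemma card_pos_le (hπ : ∀ i, Function.Injective (π i)) (t : ℕ) :
    (univ.filter (fun j => pos π s j ≤ t)).card = cumul s t := by
  rw [Finset.card_eq_sum_card_fiberwise (f := s) (t := univ) (fun x _ => mem_univ _)]
  unfold cumul
  refine Finset.sum_congr rfl (fun i _ => ?_)
  rw [Finset.filter_filter, ← card_filter_pos_le π s hπ i t]
  congr 1
  ext j
  simp [and_comm]


lemma cumul_mono {x y : ℕ} (h : x ≤ y) : cumul s x ≤ cumul s y :=
  Finset.sum_le_sum (fun i _ => min_le_min h le_rfl)

lemma cumul_lt_of_pos (hπ : ∀ i, Function.Injective (π i)) (j : J) :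
    cumul s (pos π s j - 1) < cumul s (pos π s j) := by
  rw [← card_pos_le π s hπ, ← card_pos_le π s hπ]
  apply Finset.card_lt_card
  rw [Finset.ssubset_iff_of_subset]
  · refine ⟨j, ?_, ?_⟩
    · simp
    · simp only [mem_filter, mem_univ, true_and, not_le]
      have := one_le_pos π s j; omega
  · intro x hx
    simp only [mem_filter, mem_univ, true_and] at hx ⊢
    omega

lemma rank_eq (hπ : ∀ i, Function.Injective (π i)) (j : J) :
    rankOf (fun _ => (1:ℝ)) (fun _ => (1:ℝ)) π s j
      = ((cumul s (pos π s j - 1) : ℝ) + (cumul s (pos π s j) : ℝ) + 1) / 2 := by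
  have ht := one_le_pos π s j
  unfold rankOf
  have h1 : (univ.filter (fun j' => Ctime (fun _ => (1:ℝ)) (fun _ => (1:ℝ)) π s j' <
      Ctime (fun _ => (1:ℝ)) (fun _ => (1:ℝ)) π s j))
      = univ.filter (fun j' => pos π s j' ≤ pos π s j - 1) := by
    apply Finset.filter_congr
    intro x _
    rw [Ctime_eq, Ctime_eq, Nat.cast_lt]
    omega
  have h2 : (univ.filter (fun j' => Ctime (fun _ => (1:ℝ)) (fun _ => (1:ℝ)) π s j' =
      Ctime (fun _ => (1:ℝ)) (fun _ => (1:ℝ)) π s j))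
      = univ.filter (fun j' => pos π s j' = pos π s j) := by
    apply Finset.filter_congr
    intro x _
    rw [Ctime_eq, Ctime_eq, Nat.cast_inj]
  rw [h1, h2, card_pos_le π s hπ]
  have h3 : (univ.filter (fun j' => pos π s j' ≤ pos π s j - 1)).card
      + (univ.filter (fun j' => pos π s j' = pos π s j)).card
      = cumul s (pos π s j) := by
    rw [← card_pos_le π s hπ (pos π s j), ← Finset.card_union_of_disjoint]
    · congr 1
      ext x
      simp only [mem_union, mem_filter, mem_univ, true_and]
      omega
    · rw [Finset.disjoint_filter]
      intro x _ h
      omega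
  rw [card_pos_le π s hπ] at h3
  have h4 := congrArg (fun x : ℕ => (x:ℝ)) h3
  push_cast at h4
  linarith


lemma load_update_target {j : J} {b : M} (hb : b ≠ s j) :
    load (Function.update s j b) b = load s b + 1 := by
  unfold load
  have h : (univ.filter (fun j' => Function.update s j b j' = b))
      = insert j (univ.filter (fun j' => s j' = b)) := by
    ext x
    by_cases hx : x = j
    · subst hx; simp
    · simp [Function.update_of_ne hx, hx]
  rw [h, Finset.card_insert_of_notMem (by
    simp only [mem_filter, mem_univ, true_and]
    exact fun hh => hb hh.symm)]

lemma load_update_self {j : J} {b : M} (hb : b ≠ s j) :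
    load (Function.update s j b) (s j) = load s (s j) - 1 := by
  unfold load
  have h : (univ.filter (fun j' => Function.update s j b j' = s j))
      = (univ.filter (fun j' => s j' = s j)).erase j := by
    ext x
    by_cases hx : x = j
    · subst hx; simp [hb]
    · simp [Function.update_of_ne hx, hx]
  rw [h, Finset.card_erase_of_mem (by simp)]

lemma load_update_other {j : J} {b i : M} (h1 : i ≠ s j) (h2 : i ≠ b) :
    load (Function.update s j b) i = load s i := by
  unfold load
  congr 1
  ext x
  by_cases hx : x = j
  · subst hx
    simp only [mem_filter, mem_univ, true_and, Function.update_self]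
    exact iff_of_false (fun hh => h2 hh.symm) (fun hh => h1 hh.symm)
  · simp [Function.update_of_ne hx]

lemma pos_eq_below (hπ : ∀ i, Function.Injective (π i)) (j : J) :
    pos π s j = below π s (s j) j + 1 := by
  unfold pos below
  have h : (univ.filter (fun j' => s j' = s j ∧ π (s j) j' ≤ π (s j) j))
      = insert j (univ.filter (fun j' => s j' = s j ∧ π (s j) j' < π (s j) j)) := by
    ext x
    simp only [mem_insert, mem_filter, mem_univ, true_and]
    constructor
    · rintro ⟨hx1, hx2⟩
      by_cases hx : x = j
      · exact Or.inl hx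
      · exact Or.inr ⟨hx1, lt_of_le_of_ne hx2 (fun h => hx (hπ _ h))⟩
    · rintro (rfl | ⟨hx1, hx2⟩)
      · exact ⟨rfl, le_rfl⟩
      · exact ⟨hx1, hx2.le⟩
  rw [h, Finset.card_insert_of_notMem (by simp)]

lemma pos_update (hπ : ∀ i, Function.Injective (π i)) {j : J} {b : M} (hb : b ≠ s j) :
    pos π (Function.update s j b) j = below π s b j + 1 := by
  unfold pos below
  simp only [Function.update_self]
  have h : (univ.filter (fun j' => Function.update s j b j' = b ∧ π b j' ≤ π b j))
      = insert j (univ.filter (fun j' => s j' = b ∧ π b j' < π b j)) := by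
    ext x
    by_cases hx : x = j
    · subst hx; simp
    · simp only [mem_insert, mem_filter, mem_univ, true_and,
        Function.update_of_ne hx, or_iff_right hx]
      constructor
      · rintro ⟨hx1, hx2⟩
        exact ⟨hx1, lt_of_le_of_ne hx2 (fun hh => hx (hπ _ hh))⟩
      · rintro ⟨hx1, hx2⟩
        exact ⟨hx1, hx2.le⟩
  rw [h, Finset.card_insert_of_notMem (by
    simp only [mem_filter, mem_univ, true_and, not_and]
    exact fun hh => absurd hh.symm hb)]

lemma pos_le_below {q j : J} {b : M} (hq : s q = b) (h : π b q < π b j) :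
    pos π s q ≤ below π s b j := by
  unfold pos below
  rw [hq]
  apply Finset.card_le_card
  intro x hx
  simp only [mem_filter, mem_univ, true_and] at hx ⊢
  exact ⟨hx.1, lt_of_le_of_lt hx.2 h⟩

lemma exists_pos_eq (hπ : ∀ i, Function.Injective (π i)) {b : M} {L : ℕ} (hL1 : 1 ≤ L)
    (hL2 : L ≤ load s b) : ∃ q, s q = b ∧ pos π s q = L := by
  have h1 := card_filter_pos_le π s hπ b L
  have h2 := card_filter_pos_le π s hπ b (L - 1)
  have hlt : (univ.filter (fun j => s j = b ∧ pos π s j ≤ L - 1)).card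
      < (univ.filter (fun j => s j = b ∧ pos π s j ≤ L)).card := by
    rw [h1, h2, Nat.min_eq_left hL2, Nat.min_eq_left (by omega)]; omega
  have hss : (univ.filter (fun j => s j = b ∧ pos π s j ≤ L - 1))
      ⊆ (univ.filter (fun j => s j = b ∧ pos π s j ≤ L)) := by
    intro x hx
    simp only [mem_filter, mem_univ, true_and] at hx ⊢
    exact ⟨hx.1, le_trans hx.2 (by omega)⟩
  have hss2 := Finset.ssubset_iff_subset_ne.mpr
    ⟨hss, fun he => by rw [he] at hlt; exact lt_irrefl _ hlt⟩
  obtain ⟨q, hq1, hq2⟩ := Finset.exists_of_ssubset hss2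
  simp only [mem_filter, mem_univ, true_and, not_and, not_le] at hq1 hq2
  have := hq2 hq1.1
  exact ⟨q, hq1.1, by omega⟩

lemma stable_le (hst : StableCost (fun _ => (1:ℝ)) (fun _ => (1:ℝ)) π s) (j : J) (b : M) :
    pos π s j ≤ pos π (Function.update s j b) j := by
  have := hst j b
  rw [Ctime_eq, Ctime_eq] at this
  exact_mod_cast not_lt.mp this

lemma isLastOn_iff (hπ : ∀ i, Function.Injective (π i)) (j : J) :
    IsLastOn π s (s j) j ↔ pos π s j = load s (s j) := by
  constructor
  · rintro ⟨-, h⟩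
    refine le_antisymm (pos_le_load π s j) ?_
    apply Finset.card_le_card
    intro x hx
    simp only [mem_filter, mem_univ, true_and] at hx ⊢
    refine ⟨hx, ?_⟩
    by_cases hxj : x = j
    · rw [hxj]
    · exact (h x hxj hx).le
  · intro h
    refine ⟨rfl, fun j' hj' hsj' => ?_⟩
    have heq : (univ.filter (fun j'' => s j'' = s j ∧ π (s j) j'' ≤ π (s j) j))
        = (univ.filter (fun j'' => s j'' = s j)) := by
      apply Finset.eq_of_subset_of_card_le
      · intro x hx
        simp only [mem_filter, mem_univ, true_and] at hx ⊢
        exact hx.1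
      · have h2 : load s (s j) = pos π s j := h.symm
        unfold pos at h2
        exact le_of_eq h2
    have : j' ∈ (univ.filter (fun j'' => s j'' = s j ∧ π (s j) j'' ≤ π (s j) j)) := by
      rw [heq]; simp [hsj']
    simp only [mem_filter, mem_univ, true_and] at this
    exact lt_of_le_of_ne this.2 (fun h' => hj' (hπ _ h'))

lemma pi_lt_of_load_le_below {i : M} {j j' : J} (h : load s i ≤ below π s i j')
    (hji : s j = i) : π i j < π i j' := by
  have heq : (univ.filter (fun j'' => s j'' = i ∧ π i j'' < π i j'))
      = (univ.filter (fun j'' => s j'' = i)) := by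
    apply Finset.eq_of_subset_of_card_le
    · intro x hx
      simp only [mem_filter, mem_univ, true_and] at hx ⊢
      exact hx.1
    · exact h
  have : j ∈ (univ.filter (fun j'' => s j'' = i ∧ π i j'' < π i j')) := by
    rw [heq]; simp [hji]
  simp only [mem_filter, mem_univ, true_and] at this
  exact this.2

lemma below_lt_pos {i : M} {j j' : J} (hji : s j = i) (h : π i j' < π i j) :
    below π s i j' < pos π s j := by
  have hsub : (univ.filter (fun j'' => s j'' = i ∧ π i j'' < π i j'))
      ⊆ (univ.filter (fun j'' => s j'' = s j ∧ π (s j) j'' ≤ π (s j) j)).erase j := by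
    intro x hx
    simp only [mem_filter, mem_univ, true_and, mem_erase, hji] at hx ⊢
    refine ⟨fun hxj => ?_, hx.1, le_of_lt (lt_trans hx.2 h)⟩
    rw [hxj] at hx
    exact absurd h (not_lt.mpr hx.2.le)
  have := Finset.card_le_card hsub
  rw [Finset.card_erase_of_mem (by simp)] at this
  have hp := one_le_pos π s j
  unfold below pos at *
  omega


lemma sum_pair_rest (f : M → ℕ) {a b : M} (hab : a ≠ b) :
    ∑ i, f i = f a + f b + ∑ i ∈ (univ.erase a).erase b, f i := by
  rw [← Finset.add_sum_erase _ f (mem_univ a)]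
  rw [← Finset.add_sum_erase _ f (mem_erase.mpr ⟨hab.symm, mem_univ b⟩)]
  ring

lemma one_le_load (j : J) : 1 ≤ load s (s j) :=
  Finset.card_pos.mpr ⟨j, by simp [load]⟩

lemma beneficial_iff (hπ : ∀ i, Function.Injective (π i))
    (hst : StableCost (fun _ => (1:ℝ)) (fun _ => (1:ℝ)) π s) (j : J) (b : M) (hb : b ≠ s j) :
    Beneficial (fun _ => (1:ℝ)) (fun _ => (1:ℝ)) π s j b ↔
      (below π s b j + 1 = pos π s j ∧ pos π s j = load s (s j) ∧ pos π s j ≤ load s b) := by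
  set s' := Function.update s j b with hs'
  have hsj' : s' j = b := Function.update_self j b s
  have htt' : pos π s j ≤ pos π s' j := stable_le π s hst j b
  set t := pos π s j with htdef
  set t' := pos π s' j with ht'def
  have h1t : 1 ≤ t := one_le_pos π s j
  have h1t' : 1 ≤ t' := one_le_pos π s' j
  have hA : t ≤ load s (s j) := pos_le_load π s j
  have h1A : 1 ≤ load s (s j) := one_le_load s j
  have ht'B : t' ≤ load s b + 1 := by
    have h := pos_le_load π s' j
    rwa [hsj', load_update_target s hb] at h
  -- Beneficial ↔ rank decrease
  have hben : Beneficial (fun _ => (1:ℝ)) (fun _ => (1:ℝ)) π s j b ↔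
      rankOf (fun _ => (1:ℝ)) (fun _ => (1:ℝ)) π s' j <
        rankOf (fun _ => (1:ℝ)) (fun _ => (1:ℝ)) π s j := by
    unfold Beneficial
    rw [← hs']
    constructor
    · rintro (h | ⟨-, h⟩)
      · exact h
      · rw [Ctime_eq, Ctime_eq] at h
        exact absurd h (by push_neg; exact_mod_cast htt')
    · exact Or.inl
  rw [hben, rank_eq π s hπ j, rank_eq π s' hπ j, ← htdef, ← ht'def]
  -- to ℕ
  have hnat : ((cumul s' (t' - 1) : ℝ) + (cumul s' t' : ℝ) + 1) / 2 <
      ((cumul s (t - 1) : ℝ) + (cumul s t : ℝ) + 1) / 2 ↔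
      cumul s' (t' - 1) + cumul s' t' < cumul s (t - 1) + cumul s t := by
    constructor
    · intro h
      by_contra h'
      push_neg at h'
      have : (cumul s (t-1) : ℝ) + cumul s t ≤ (cumul s' (t'-1) : ℝ) + cumul s' t' := by
        exact_mod_cast h'
      linarith
    · intro h
      have : (cumul s' (t'-1) : ℝ) + cumul s' t' + 1 ≤ (cumul s (t-1) : ℝ) + cumul s t := by
        exact_mod_cast h
      linarith
  rw [hnat]
  -- cumul decompositions
  have hrest : ∀ x, cumul s' x = min x (load s (s j) - 1) + min x (load s b + 1)
      + ∑ i ∈ (univ.erase (s j)).erase b, min x (load s i) := by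
    intro x
    rw [cumul, sum_pair_rest _ (fun hh => hb hh.symm), load_update_self s hb,
      load_update_target s hb]
    congr 1
    refine Finset.sum_congr rfl (fun i hi => ?_)
    simp only [mem_erase] at hi
    rw [load_update_other s hi.2.1 hi.1]
  have hrests : ∀ x, cumul s x = min x (load s (s j)) + min x (load s b)
      + ∑ i ∈ (univ.erase (s j)).erase b, min x (load s i) := by
    intro x
    rw [cumul, sum_pair_rest _ (fun hh => hb hh.symm)]
  rcases eq_or_lt_of_le htt' with heq | hlt
  · -- t' = t
    rw [← heq]
    have htB1 : t ≤ load s b + 1 := by rw [heq]; exact ht'B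
    have e1 : cumul s' (t - 1) = cumul s (t - 1) := by
      rw [hrest, hrests]
      have m1 : min (t-1) (load s (s j) - 1) = min (t-1) (load s (s j)) := by omega
      have m2 : min (t-1) (load s b + 1) = min (t-1) (load s b) := by omega
      rw [m1, m2]
    rw [e1]
    have e2 : cumul s' t < cumul s t ↔ (t = load s (s j) ∧ t ≤ load s b) := by
      rw [hrest, hrests]
      omega
    constructor
    · intro h
      have h2 := e2.mp (by omega)
      refine ⟨?_, h2.1, h2.2⟩
      rw [heq, ht'def, hs']
      exact (pos_update π s hπ hb).symm
    · rintro ⟨hbel, h2, h3⟩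
      have := e2.mpr ⟨h2, h3⟩
      omega
  · -- t < t'
    constructor
    · intro h
      exfalso
      have c1 : cumul s' t ≤ cumul s' (t' - 1) := cumul_mono s' (by omega)
      have c2 : cumul s' (t' - 1) < cumul s' t' := cumul_lt_of_pos π s' hπ j
      have c3 : cumul s (t - 1) < cumul s t := cumul_lt_of_pos π s hπ j
      have c4 : cumul s t ≤ cumul s' t + 1 := by
        rw [hrest, hrests]
        omega
      omega
    · rintro ⟨hbel, -, -⟩
      exfalso
      rw [ht'def, hs', pos_update π s hπ hb] at hlt
      omega

lemma not_beneficial_self (j : J) :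
    ¬ Beneficial (fun _ => (1:ℝ)) (fun _ => (1:ℝ)) π s j (s j) := by
  unfold Beneficial
  rw [Function.update_eq_self]
  simp

lemma ne_iff_star (hπ : ∀ i, Function.Injective (π i))
    (hst : StableCost (fun _ => (1:ℝ)) (fun _ => (1:ℝ)) π s) :
    IsNE (fun _ => (1:ℝ)) (fun _ => (1:ℝ)) π s ↔
      ∀ j b, b ≠ s j → pos π s j = load s (s j) → pos π s j ≤ load s b →
        pos π s j ≤ below π s b j := by
  constructor
  · intro h j b hb h1 h2
    have hnb := h j b
    rw [beneficial_iff π s hπ hst j b hb] at hnb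
    have hstl : pos π s j ≤ below π s b j + 1 := by
      have := stable_le π s hst j b
      rwa [pos_update π s hπ hb] at this
    by_contra hcon
    push_neg at hcon
    exact hnb ⟨by omega, h1, h2⟩
  · intro h j b
    by_cases hb : b = s j
    · rw [hb]; exact not_beneficial_self π s j
    · rw [beneficial_iff π s hπ hst j b hb]
      rintro ⟨h1, h2, h3⟩
      have := h j b hb h2 h3
      omega


end Sched

/-- Characterization of NE among balanced cost-stable profiles of unit jobs on
identical machines. -/
theorem NE_iff_balanced (n m ℓ c : ℕ) (hm : 0 < m) (hc : c < m) (hn : n = ℓ * m + c)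
    (π : Fin m → Fin n → ℕ) (hπ : ∀ i, Function.Injective (π i))
    (s : Fin n → Fin m)
    (hstable : StableCost (fun _ => (1:ℝ)) (fun _ => (1:ℝ)) π s)
    (hload : ∀ i, (univ.filter (fun j => s j = i)).card = ℓ ∨
      (univ.filter (fun j => s j = i)).card = ℓ + 1)
    (hbal : (univ.filter (fun i : Fin m =>
      (univ.filter (fun j => s j = i)).card = ℓ + 1)).card = c) :
    IsNE (fun _ => (1:ℝ)) (fun _ => (1:ℝ)) π s ↔
      ((∀ j, Ctime (fun _ => (1:ℝ)) (fun _ => (1:ℝ)) π s j = (ℓ : ℝ) + 1 →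
          ∀ j', Ctime (fun _ => (1:ℝ)) (fun _ => (1:ℝ)) π s j' = (ℓ : ℝ) + 1 → j' ≠ j → π (s j) j < π (s j) j') ∧
        (∀ j, Ctime (fun _ => (1:ℝ)) (fun _ => (1:ℝ)) π s j = (ℓ : ℝ) → IsLastOn π s (s j) j →
          ∀ j', Ctime (fun _ => (1:ℝ)) (fun _ => (1:ℝ)) π s j' = (ℓ : ℝ) → IsLastOn π s (s j') j' → j' ≠ j →
            π (s j) j < π (s j) j') ∧
        (∀ j, Ctime (fun _ => (1:ℝ)) (fun _ => (1:ℝ)) π s j = (ℓ : ℝ) → ¬ IsLastOn π s (s j) j →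
          ∀ j', Ctime (fun _ => (1:ℝ)) (fun _ => (1:ℝ)) π s j' = (ℓ : ℝ) → IsLastOn π s (s j') j' →
            π (s j) j < π (s j) j')) := by
  have hload' : ∀ i, Sched.load s i = ℓ ∨ Sched.load s i = ℓ + 1 := by
    intro i; unfold Sched.load
    rcases hload i with h | h
    · left; rw [← h]; congr 1; ext x; simp
    · right; rw [← h]; congr 1; ext x; simp
  rw [Sched.ne_iff_star π s hπ hstable]
  constructor
  · intro star
    refine ⟨?_, ?_, ?_⟩
    · -- (1)
      intro j hj j' hj' hne
      rw [Sched.Ctime_eq] at hj hj'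
      have hpj : Sched.pos π s j = ℓ + 1 := by exact_mod_cast hj
      have hpj' : Sched.pos π s j' = ℓ + 1 := by exact_mod_cast hj'
      have hplj := Sched.pos_le_load π s j
      have hplj' := Sched.pos_le_load π s j'
      have hlj : Sched.load s (s j) = ℓ + 1 := by rcases hload' (s j) with h|h <;> omega
      have hlj' : Sched.load s (s j') = ℓ + 1 := by rcases hload' (s j') with h|h <;> omega
      have hsne : s j' ≠ s j :=
        fun h => hne (Sched.pos_inj π s hπ h (hpj'.trans hpj.symm))
      have hstar := star j' (s j) hsne.symm (by omega) (by omega)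
      exact Sched.pi_lt_of_load_le_below π s (by omega) rfl
    · -- (2a)
      intro j hj hlast j' hj' hlast' hne
      rw [Sched.Ctime_eq] at hj hj'
      have hpj : Sched.pos π s j = ℓ := by exact_mod_cast hj
      have hpj' : Sched.pos π s j' = ℓ := by exact_mod_cast hj'
      rw [Sched.isLastOn_iff π s hπ] at hlast hlast'
      have hsne : s j' ≠ s j :=
        fun h => hne (Sched.pos_inj π s hπ h (hpj'.trans hpj.symm))
      have hstar := star j' (s j) hsne.symm hlast' (by omega)
      exact Sched.pi_lt_of_load_le_below π s (by omega) rfl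
    · -- (2b)
      intro j hj hnlast j' hj' hlast'
      rw [Sched.Ctime_eq] at hj hj'
      have hpj : Sched.pos π s j = ℓ := by exact_mod_cast hj
      have hpj' : Sched.pos π s j' = ℓ := by exact_mod_cast hj'
      rw [Sched.isLastOn_iff π s hπ] at hnlast hlast'
      have hple := Sched.pos_le_load π s j
      have hlj : Sched.load s (s j) = ℓ + 1 := by rcases hload' (s j) with h|h <;> omega
      have hsne : s j' ≠ s j := by
        intro h
        rw [h] at hlast'
        omega
      have hstar := star j' (s j) hsne.symm hlast' (by omega)
      by_contra hcon
      push_neg at hcon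
      have hne2 : j ≠ j' := fun h => hsne (by rw [h])
      have hlt2 : π (s j) j' < π (s j) j :=
        lt_of_le_of_ne hcon (fun h => hne2 ((hπ _ h).symm))
      have := Sched.below_lt_pos π s rfl hlt2
      omega
  · rintro ⟨c1, c2a, c2b⟩ j b hb hlast hle
    have h1t := Sched.one_le_pos π s j
    have hCj : Ctime (fun _ => (1:ℝ)) (fun _ => (1:ℝ)) π s j = (Sched.pos π s j : ℝ) :=
      Sched.Ctime_eq π s j
    have hlastj : IsLastOn π s (s j) j := (Sched.isLastOn_iff π s hπ j).mpr hlast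
    rcases hload' (s j) with hA | hA
    · -- light machine: pos j = ℓ
      have hpj : Sched.pos π s j = ℓ := by omega
      have hC : Ctime (fun _ => (1:ℝ)) (fun _ => (1:ℝ)) π s j = (ℓ : ℝ) := by
        rw [hCj, hpj]
      rcases hload' b with hB | hB
      · obtain ⟨q, hq1, hq2⟩ := Sched.exists_pos_eq π s hπ (b := b) (L := ℓ) (by omega) (by omega)
        have hq3 : Sched.pos π s q = Sched.load s (s q) := by rw [hq1, hq2, hB]
        have hCq : Ctime (fun _ => (1:ℝ)) (fun _ => (1:ℝ)) π s q = (ℓ : ℝ) := by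
          rw [Sched.Ctime_eq, hq2]
        have hlastq : IsLastOn π s (s q) q := (Sched.isLastOn_iff π s hπ q).mpr hq3
        have hne : j ≠ q := fun h => hb (by rw [h, hq1])
        have hπq := c2a q hCq hlastq j hC hlastj hne
        rw [hq1] at hπq
        have := Sched.pos_le_below π s hq1 hπq
        omega
      · obtain ⟨w, hw1, hw2⟩ := Sched.exists_pos_eq π s hπ (b := b) (L := ℓ) (by omega) (by omega)
        have hCw : Ctime (fun _ => (1:ℝ)) (fun _ => (1:ℝ)) π s w = (ℓ : ℝ) := by
          rw [Sched.Ctime_eq, hw2]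
        have hnlastw : ¬ IsLastOn π s (s w) w := by
          rw [Sched.isLastOn_iff π s hπ, hw1, hw2, hB]
          omega
        have hπw := c2b w hCw hnlastw j hC hlastj
        rw [hw1] at hπw
        have := Sched.pos_le_below π s hw1 hπw
        omega
    · -- heavy machine: pos j = ℓ+1
      have hpj : Sched.pos π s j = ℓ + 1 := by omega
      have hB : Sched.load s b = ℓ + 1 := by rcases hload' b with h|h <;> omega
      obtain ⟨q, hq1, hq2⟩ := Sched.exists_pos_eq π s hπ (b := b) (L := ℓ + 1) (by omega) (by omega)
      have hCq : Ctime (fun _ => (1:ℝ)) (fun _ => (1:ℝ)) π s q = (ℓ : ℝ) + 1 := by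
        rw [Sched.Ctime_eq, hq2]; push_cast; ring
      have hC : Ctime (fun _ => (1:ℝ)) (fun _ => (1:ℝ)) π s j = (ℓ : ℝ) + 1 := by
        rw [hCj, hpj]; push_cast; ring
      have hne : j ≠ q := fun h => hb (by rw [h, hq1])
      have hπq := c1 q hCq j hC hne
      rw [hq1] at hπq
      have := Sched.pos_le_below π s hq1 hπq
      omega
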